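/- Let T : E → F be a generalised triple homomorphism between real Jordan Banach triples, and let (xₙ), (yₙ) be sequences in E with Q(yₙ)Q(xₙ) = Q(xₙ) and Q(yₙ)Q(xₘ) = 0 for n ≠ m, where Q(a)(x) = {a,x,a}. Then the map T∘Q(xₙ) : E → F is continuous for all but finitely many n. -/

import Mathlib

open Filter Topology

/-- A (real) Jordan Banach triple: a Banach space with a continuous triple
product, (real-)linear in each variable, symmetric in the outer variables and
satisfying the Jordan identity. -/
structure JordanBanachTriple (E : Type*) [NormedAddCommGroup E] [NormedSpace ℝ E] where
  tp : E → E → E → E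
  add_left : ∀ a a' b c, tp (a + a') b c = tp a b c + tp a' b c
  smul_left : ∀ (r : ℝ) a b c, tp (r • a) b c = r • tp a b c
  add_mid : ∀ a b b' c, tp a (b + b') c = tp a b c + tp a b' c
  smul_mid : ∀ (r : ℝ) a b c, tp a (r • b) c = r • tp a b c
  symm : ∀ a b c, tp a b c = tp c b a
  jordan : ∀ a b x y z,
    tp a b (tp x y z) = tp (tp a b x) y z - tp x (tp b a y) z + tp x y (tp a b z)
  bound : ∃ C > 0, ∀ a b c, ‖tp a b c‖ ≤ C * ‖a‖ * ‖b‖ * ‖c‖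

def sepSpace {X Y : Type*} [NormedAddCommGroup X] [NormedAddCommGroup Y]
    (T : X → Y) : Set Y :=
  {z | ∃ x : ℕ → X, Tendsto x atTop (𝓝 0) ∧ Tendsto (fun n => T (x n)) atTop (𝓝 z)}

/-- `Q(a)` as a continuous linear map, given a bound for the triple product. -/
noncomputable def Qclm {E : Type*} [NormedAddCommGroup E] [NormedSpace ℝ E]
    (J : JordanBanachTriple E) (M : ℝ)
    (hM : ∀ a b c, ‖J.tp a b c‖ ≤ M * ‖a‖ * ‖b‖ * ‖c‖) (a : E) : E →L[ℝ] E :=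
  LinearMap.mkContinuous
    { toFun := fun z => J.tp a z a
      map_add' := fun b b' => J.add_mid a b b' a
      map_smul' := fun r b => J.smul_mid r a b a }
    (M * ‖a‖ * ‖a‖)
    (fun z => by
      calc ‖J.tp a z a‖ ≤ M * ‖a‖ * ‖z‖ * ‖a‖ := hM a z a
        _ = M * ‖a‖ * ‖a‖ * ‖z‖ := by ring)

@[simp] lemma Qclm_apply {E : Type*} [NormedAddCommGroup E] [NormedSpace ℝ E]
    (J : JordanBanachTriple E) (M : ℝ)
    (hM : ∀ a b c, ‖J.tp a b c‖ ≤ M * ‖a‖ * ‖b‖ * ‖c‖) (a z : E) :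
    Qclm J M hM a z = J.tp a z a := rfl

/-- A discontinuous linear map admits vectors of small norm with large image norm. -/
lemma exists_small_big {E F : Type*} [NormedAddCommGroup E] [NormedSpace ℝ E]
    [NormedAddCommGroup F] [NormedSpace ℝ F]
    (S : E →ₗ[ℝ] F) (hS : ¬ Continuous S) {ε : ℝ} (hε : 0 < ε) (K : ℝ) :
    ∃ w : E, ‖w‖ ≤ ε ∧ K ≤ ‖S w‖ := by
  have hnb : ∀ M : ℝ, ∃ w, M * ‖w‖ < ‖S w‖ := by
    by_contra hb
    push_neg at hb
    obtain ⟨M, hM⟩ := hb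
    exact hS (AddMonoidHomClass.continuous_of_bound S M (fun w => hM w))
  obtain ⟨w, hw⟩ := hnb (|K| / ε)
  have hw0 : w ≠ 0 := by
    rintro rfl
    simp at hw
  have hwn : 0 < ‖w‖ := norm_pos_iff.mpr hw0
  refine ⟨(ε / ‖w‖) • w, ?_, ?_⟩
  · have : ‖(ε / ‖w‖) • w‖ = (ε / ‖w‖) * ‖w‖ := by
      rw [norm_smul, Real.norm_eq_abs, abs_of_pos (div_pos hε hwn)]
    rw [this, div_mul_cancel₀ _ (ne_of_gt hwn)]
  · have h1 : ‖S ((ε / ‖w‖) • w)‖ = (ε / ‖w‖) * ‖S w‖ := by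
      rw [map_smul, norm_smul, Real.norm_eq_abs, abs_of_pos (div_pos hε hwn)]
    rw [h1]
    have h2 : (ε / ‖w‖) * ((|K| / ε) * ‖w‖) ≤ (ε / ‖w‖) * ‖S w‖ :=
      mul_le_mul_of_nonneg_left (le_of_lt hw) (le_of_lt (div_pos hε hwn))
    have h3 : (ε / ‖w‖) * ((|K| / ε) * ‖w‖) = |K| := by
      field_simp
    calc K ≤ |K| := le_abs_self K
      _ = (ε / ‖w‖) * ((|K| / ε) * ‖w‖) := h3.symm
      _ ≤ (ε / ‖w‖) * ‖S w‖ := h2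

/-- If `Q(yₙ)Q(xₙ) = Q(xₙ)` and `Q(yₙ)Q(xₘ) = 0` for `n ≠ m`, then
`T ∘ Q(xₙ)` is continuous for all but finitely many `n`. -/
theorem stmt16 {E F : Type*}
    [NormedAddCommGroup E] [NormedSpace ℝ E] [CompleteSpace E]
    [NormedAddCommGroup F] [NormedSpace ℝ F] [CompleteSpace F]
    (JE : JordanBanachTriple E) (JF : JordanBanachTriple F)
    (T : E →ₗ[ℝ] F) (C : ℝ) (hC : 0 < C)
    (h : ∀ a b c, ‖T (JE.tp a b c) - JF.tp (T a) (T b) (T c)‖ ≤ C * ‖a‖ * ‖b‖ * ‖c‖)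
    (x y : ℕ → E)
    (h1 : ∀ n, ∀ z : E, JE.tp (y n) (JE.tp (x n) z (x n)) (y n) = JE.tp (x n) z (x n))
    (h2 : ∀ n m, n ≠ m → ∀ z : E, JE.tp (y n) (JE.tp (x m) z (x m)) (y n) = 0) :
    {n : ℕ | ¬ Continuous fun z => T (JE.tp (x n) z (x n))}.Finite := by
  obtain ⟨ME, hME, hEb⟩ := JE.bound
  obtain ⟨MF, hMF, hFb⟩ := JF.bound
  by_contra hfin
  have hinf : {n : ℕ | ¬ Continuous fun z => T (JE.tp (x n) z (x n))}.Infinite := hfin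
  set e := Set.Infinite.natEmbedding _ hinf with he
  set n : ℕ → ℕ := fun k => (e k : ℕ) with hn
  have hninj : Function.Injective n := fun a b hab => e.injective (Subtype.ext hab)
  have hdisc : ∀ k, ¬ Continuous fun z => T (JE.tp (x (n k)) z (x (n k))) := fun k => (e k).2
  -- linear maps T ∘ Q(x (n k))
  set S : ℕ → E →ₗ[ℝ] F := fun k =>
    T.comp ((Qclm JE ME hEb (x (n k))) : E →ₗ[ℝ] E) with hS
  have hSapp : ∀ k z, S k z = T (JE.tp (x (n k)) z (x (n k))) := fun k z => rfl
  have hSdisc : ∀ k, ¬ Continuous (S k) := fun k hc => hdisc k hc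
  -- choose the gliding-hump vectors
  have key : ∀ k : ℕ, ∃ w : E,
      ‖w‖ ≤ (1/2)^k / (1 + ME * ‖x (n k)‖ * ‖x (n k)‖) ∧
      ((k : ℝ) + 1) * (1 + C * ‖y (n k)‖ * ‖y (n k)‖
        + MF * ‖T (y (n k))‖ * ‖T (y (n k))‖) ≤ ‖S k w‖ := by
    intro k
    have hden : 0 < 1 + ME * ‖x (n k)‖ * ‖x (n k)‖ := by positivity
    exact exists_small_big (S k) (hSdisc k) (by positivity) _
  choose w hw1 hw2 using key
  set v : ℕ → E := fun k => JE.tp (x (n k)) (w k) (x (n k)) with hv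
  have hvb : ∀ k, ‖v k‖ ≤ (1/2)^k := by
    intro k
    have hden : 0 < 1 + ME * ‖x (n k)‖ * ‖x (n k)‖ := by positivity
    have hb := hEb (x (n k)) (w k) (x (n k))
    have hxk : 0 ≤ ME * ‖x (n k)‖ * ‖x (n k)‖ := by positivity
    have h3 : ME * ‖x (n k)‖ * ‖w k‖ * ‖x (n k)‖
        = (ME * ‖x (n k)‖ * ‖x (n k)‖) * ‖w k‖ := by ring
    have h4 : (ME * ‖x (n k)‖ * ‖x (n k)‖) * ‖w k‖
        ≤ (1 + ME * ‖x (n k)‖ * ‖x (n k)‖) * ((1/2)^k / (1 + ME * ‖x (n k)‖ * ‖x (n k)‖)) := by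
      apply mul_le_mul (by linarith) (hw1 k) (norm_nonneg _) (by linarith)
    have h5 : (1 + ME * ‖x (n k)‖ * ‖x (n k)‖) * ((1/2)^k / (1 + ME * ‖x (n k)‖ * ‖x (n k)‖))
        = (1/2)^k := by field_simp
    calc ‖v k‖ ≤ ME * ‖x (n k)‖ * ‖w k‖ * ‖x (n k)‖ := hb
      _ = (ME * ‖x (n k)‖ * ‖x (n k)‖) * ‖w k‖ := h3
      _ ≤ _ := h4
      _ = (1/2)^k := h5
  have hgeom : Summable (fun k : ℕ => ((1:ℝ)/2)^k) :=
    summable_geometric_of_lt_one (by norm_num) (by norm_num)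
  have hsum : Summable v :=
    Summable.of_norm_bounded hgeom hvb
  set z : E := ∑' k, v k with hz
  have hzn : ‖z‖ ≤ 2 := by
    have hsn : Summable (fun k => ‖v k‖) :=
      Summable.of_nonneg_of_le (fun k => norm_nonneg _) hvb hgeom
    have := norm_tsum_le_tsum_norm hsn
    have h2' : (∑' k, ‖v k‖) ≤ ∑' k : ℕ, ((1:ℝ)/2)^k := Summable.tsum_le_tsum hvb hsn hgeom
    have h3' : (∑' k : ℕ, ((1:ℝ)/2)^k) = 2 := by
      rw [tsum_geometric_of_lt_one (by norm_num) (by norm_num)]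
      norm_num
    linarith
  -- Q(y (n j)) z = v j
  have hQz : ∀ j, JE.tp (y (n j)) z (y (n j)) = v j := by
    intro j
    have hmap := (Qclm JE ME hEb (y (n j))).map_tsum hsum
    have hsingle : (∑' k, Qclm JE ME hEb (y (n j)) (v k)) = Qclm JE ME hEb (y (n j)) (v j) := by
      apply tsum_eq_single
      intro k hk
      simp only [Qclm_apply]
      exact h2 (n j) (n k) (fun hh => hk (hninj hh).symm) (w k)
    have hjj : Qclm JE ME hEb (y (n j)) (v j) = v j := h1 (n j) (w j)
    calc JE.tp (y (n j)) z (y (n j)) = Qclm JE ME hEb (y (n j)) z := rfl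
      _ = ∑' k, Qclm JE ME hEb (y (n j)) (v k) := hmap
      _ = Qclm JE ME hEb (y (n j)) (v j) := hsingle
      _ = v j := hjj
  -- the contradiction
  set A : ℝ := ‖T z‖ with hA
  have hfinal : ∀ j : ℕ, (j : ℝ) + 1 ≤ 2 + A := by
    intro j
    set a := y (n j) with ha
    set c : ℝ := C * ‖a‖ * ‖a‖ with hc
    set d : ℝ := MF * ‖T a‖ * ‖T a‖ with hd
    have hc0 : 0 ≤ c := by positivity
    have hd0 : 0 ≤ d := by positivity
    have hTv : T (v j) = T (JE.tp a z a) := by rw [hQz j]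
    have hub : ‖T (JE.tp a z a)‖ ≤ c * ‖z‖ + d * A := by
      have htri : ‖T (JE.tp a z a)‖
          ≤ ‖T (JE.tp a z a) - JF.tp (T a) (T z) (T a)‖ + ‖JF.tp (T a) (T z) (T a)‖ := by
        calc ‖T (JE.tp a z a)‖
            = ‖(T (JE.tp a z a) - JF.tp (T a) (T z) (T a)) + JF.tp (T a) (T z) (T a)‖ := by
              congr 1
              abel
          _ ≤ _ := norm_add_le _ _
      have hh1 := h a z a
      have hh2 := hFb (T a) (T z) (T a)
      have : C * ‖a‖ * ‖z‖ * ‖a‖ = c * ‖z‖ := by rw [hc]; ring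
      have h2' : MF * ‖T a‖ * ‖T z‖ * ‖T a‖ = d * A := by rw [hd, hA]; ring
      linarith
    have hlow : ((j : ℝ) + 1) * (1 + c + d) ≤ ‖T (v j)‖ := by
      have := hw2 j
      rw [hSapp] at this
      exact this
    have hmid : ‖T (v j)‖ ≤ c * ‖z‖ + d * A := by rw [hTv]; exact hub
    have hA0 : 0 ≤ A := norm_nonneg _
    have hchain : ((j : ℝ) + 1) * (1 + c + d) ≤ (1 + c + d) * (2 + A) := by
      have : c * ‖z‖ + d * A ≤ (1 + c + d) * (2 + A) := by nlinarith
      linarith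
    have hpos : (0:ℝ) < 1 + c + d := by linarith
    nlinarith
  have := hfinal (Nat.ceil (2 + A))
  have hce : (2 + A) ≤ (Nat.ceil (2 + A) : ℝ) := Nat.le_ceil _
  linarith
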